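/- For all real numbers d_0, d_1 and every integer k ≥ 1: c^{(k)}(d_0, d_1) = Σ_{i=0}^{⌊k/2⌋} C(k, 2i) · Σ_{s=0}^{min{i, k−2i}} C(2i, s+i) · Σ_{m=0}^{⌊(k−2i−s)/2⌋} C(k−2i, s+2m) · C(s+2m, m) · d_0^{2i} · d_1^{k−2i} / 2^{2k−2i+2m+max{0, s−1}}, where C denotes the binomial coefficient. -/

import Mathlib

open Finset

/-- The weights `U_0 = d1/4`, `U_1 = d0/2`, `U_2 = d1/8`. -/
noncomputable def Uwt (d0 d1 : ℝ) : ℕ → ℝ :=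
  fun a => if a = 0 then d1 / 4 else if a = 1 then d0 / 2 else d1 / 8

/-- The weighted closed-path sum `c^{(k)}(d0,d1)`: the sum over all sequences
`γ : Fin k → {-2,-1,0,1,2}` with `∑ γ t = 0` of `∏ t, U_{|γ t|}`. -/
noncomputable def cpath (d0 d1 : ℝ) (k : ℕ) : ℝ :=
  ∑ γ ∈ (Finset.univ : Finset (Fin k → ({-2, -1, 0, 1, 2} : Finset ℤ))).filter
      (fun γ => ∑ t, (γ t : ℤ) = 0),
    ∏ t, Uwt d0 d1 (γ t : ℤ).natAbs

open Polynomial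

section NatIdentities

lemma coeff_twoX (M b : ℕ) : ((2*X+1 : Polynomial ℕ)^M).coeff b = 2^b * M.choose b := by
  rw [add_pow, Polynomial.finset_sum_coeff]
  have h : ∀ r ∈ Finset.range (M+1), ((2*X:Polynomial ℕ)^r * 1^(M-r) * (M.choose r : Polynomial ℕ)).coeff b
      = if b = r then 2^b * M.choose b else 0 := by
    intro r hr
    simp only [one_pow, mul_one, mul_pow, mul_assoc]
    rw [← Polynomial.C_eq_natCast, show (2:Polynomial ℕ) = Polynomial.C 2 from rfl, ← Polynomial.C.map_pow,
      Polynomial.coeff_C_mul, Polynomial.coeff_mul_C, Polynomial.coeff_X_pow]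
    split_ifs with hbr
    · subst hbr; push_cast; ring
    · ring
  rw [Finset.sum_congr rfl h, Finset.sum_ite_eq]
  split_ifs with hb
  · rfl
  · simp only [Finset.mem_range, not_lt] at hb
    rw [Nat.choose_eq_zero_of_lt (by omega), mul_zero]

lemma lemB (n s : ℕ) (hs : s ≤ n) :
    ∑ m ∈ Finset.range ((n-s)/2+1), 2^(n-s-2*m) * (n.choose (s+2*m)) * ((s+2*m).choose m)
      = (2*n).choose (n+s) := by
  have key : ((X+1 : Polynomial ℕ)^(2*n)).coeff (n-s) = (2*n).choose (n-s) := by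
    rw [Polynomial.coeff_X_add_one_pow, Nat.cast_id]
  have hfac : ((X+1 : Polynomial ℕ)^(2*n)) = (X^2 + (2*X+1))^n := by
    rw [two_mul, pow_add, ← mul_pow]; ring_nf
  rw [hfac, add_pow, Polynomial.finset_sum_coeff] at key
  have h : ∀ m ∈ Finset.range (n+1),
      (((X:Polynomial ℕ)^2)^m * (2*X+1)^(n-m) * ((n.choose m) : Polynomial ℕ)).coeff (n-s)
      = if m ∈ Finset.range ((n-s)/2+1) then 2^(n-s-2*m) * (n.choose (s+2*m)) * ((s+2*m).choose m) else 0 := by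
    intro m hm
    simp only [Finset.mem_range] at hm
    rw [← pow_mul, mul_assoc, Polynomial.coeff_X_pow_mul']
    split_ifs with h2m hmem hmem
    · -- 2*m ≤ n-s and m ≤ (n-s)/2
      rw [← Polynomial.C_eq_natCast, Polynomial.coeff_mul_C, coeff_twoX]
      have hle : s + 2*m ≤ n := by omega
      have e1 : (n-m).choose (n-s-2*m) = (n-m).choose (s+m) := by
        have : n - s - 2*m = (n-m) - (s+m) := by omega
        rw [this, Nat.choose_symm (by omega)]
      have e2 : n.choose (s+2*m) * (s+2*m).choose m = n.choose m * ((n-m).choose (s+m)) := by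
        rw [Nat.choose_mul (n := n) (by omega : m ≤ s+2*m)]
        congr 2
        omega
      rw [e1]
      calc 2^(n-s-2*m) * (n-m).choose (s+m) * n.choose m
          = 2^(n-s-2*m) * (n.choose m * (n-m).choose (s+m)) := by ring
        _ = _ := by rw [← e2]; ring
    · exfalso; simp [Finset.mem_range] at hmem; omega
    · exfalso; simp [Finset.mem_range] at hmem; omega
    · rfl
  rw [Finset.sum_congr rfl h, Finset.sum_ite_mem] at key
  have hint : Finset.range (n+1) ∩ Finset.range ((n-s)/2+1) = Finset.range ((n-s)/2+1) := by
    rw [Finset.inter_eq_right]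
    intro x hx; simp only [Finset.mem_range] at *; omega
  rw [hint] at key
  rw [key]
  rw [show n - s = 2*n - (n+s) by omega, Nat.choose_symm (by omega)]

lemma lemD (i n : ℕ) :
    ∑ s ∈ Finset.range (min i n + 1),
        (2*i).choose (s+i) * ((2*n).choose (n+s) * (if s = 0 then 1 else 2))
      = (2*i+2*n).choose (i+n) := by
  have hv : (2*i+2*n).choose (i+n)
      = ∑ j ∈ Finset.range (i+n+1), (2*i).choose j * (2*n).choose (i+n-j) := by
    rw [Nat.add_choose_eq, Finset.Nat.sum_antidiagonal_eq_sum_range_succ_mk]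
  set u : ℕ → ℕ := fun σ => (2*i).choose (i+σ) * (2*n).choose (n+σ) with hu
  have split : ∑ j ∈ Finset.range (i+n+1), (2*i).choose j * (2*n).choose (i+n-j)
      = (∑ σ ∈ Finset.range (i+1), u σ) + ∑ σ ∈ Finset.range n, u (σ+1) := by
    have : i+n+1 = (i+1) + n := by omega
    rw [this, Finset.sum_range_add]
    congr 1
    · -- reflect
      rw [← Finset.sum_range_reflect]
      apply Finset.sum_congr rfl
      intro σ hσ
      simp only [Finset.mem_range] at hσ
      have h1 : i + 1 - 1 - σ = i - σ := by omega
      rw [h1, hu]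
      have h2 : i + n - (i - σ) = n + σ := by omega
      rw [h2, show i - σ = 2*i - (i+σ) by omega, Nat.choose_symm (by omega)]
    · apply Finset.sum_congr rfl
      intro σ hσ
      simp only [Finset.mem_range] at hσ
      rw [hu]
      have h2 : i + n - (i + 1 + σ) = n - (σ+1) := by omega
      rw [h2, show i+1+σ = i+(σ+1) by omega,
        show n - (σ+1) = 2*n - (n+(σ+1)) by omega, Nat.choose_symm (by omega)]
  -- trim both sums to range (min i n)
  have trim1 : ∑ σ ∈ Finset.range (i+1), u σ = u 0 + ∑ σ ∈ Finset.range (min i n), u (σ+1) := by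
    rw [Finset.sum_range_succ']
    rw [add_comm]
    congr 1
    apply (Finset.sum_subset (by intro x hx; simp only [Finset.mem_range] at *; omega) ?_).symm
    intro x hx hnx
    simp only [Finset.mem_range] at hx hnx
    rw [hu]
    simp only
    rw [Nat.choose_eq_zero_of_lt (show 2*n < n+(x+1) by omega), mul_zero]
  have trim2 : ∑ σ ∈ Finset.range n, u (σ+1) = ∑ σ ∈ Finset.range (min i n), u (σ+1) := by
    apply (Finset.sum_subset (by intro x hx; simp only [Finset.mem_range] at *; omega) ?_).symm
    intro x hx hnx
    simp only [Finset.mem_range] at hx hnx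
    rw [hu]; simp only
    rw [Nat.choose_eq_zero_of_lt (show 2*i < i + (x+1) by omega), zero_mul]
  rw [hv, split, trim1, trim2, Finset.sum_range_succ']
  simp only [if_neg (Nat.succ_ne_zero _), if_pos rfl, hu, mul_one]
  have hcong : ∀ x ∈ Finset.range (min i n),
      (2*i).choose (x+1+i) * ((2*n).choose (n+(x+1)) * 2)
      = (2*i).choose (i+(x+1)) * (2*n).choose (n+(x+1))
        + (2*i).choose (i+(x+1)) * (2*n).choose (n+(x+1)) := by
    intro x _
    rw [show x+1+i = i+(x+1) by omega]; ring
  rw [Finset.sum_congr rfl hcong, Finset.sum_add_distrib, show 0+i = i by omega]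
  simp only [if_true, mul_one]
  abel

lemma lemW (n s : ℕ) (hs : s ≤ n) :
    ∑ m ∈ Finset.range ((n-s)/2+1),
        (n.choose (s+2*m)) * ((s+2*m).choose m) * 2^(n-2*m-(s-1))
      = (2*n).choose (n+s) * (if s = 0 then 1 else 2) := by
  rw [← lemB n s hs, Finset.sum_mul]
  apply Finset.sum_congr rfl
  intro m hm
  simp only [Finset.mem_range] at hm
  have h2m : 2*m ≤ n - s := by omega
  rcases Nat.eq_zero_or_pos s with hs0 | hs1
  · subst hs0
    rw [if_pos rfl, mul_one, show n - 2*m - (0-1) = n - 0 - 2*m by omega]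
    ring
  · rw [if_neg (by omega), show n - 2*m - (s-1) = (n - s - 2*m) + 1 by omega, pow_succ]
    ring

lemma lemDW (i n : ℕ) :
    ∑ s ∈ Finset.range (min i n + 1),
        (2*i).choose (s+i) * ∑ m ∈ Finset.range ((n-s)/2+1),
          (n.choose (s+2*m)) * ((s+2*m).choose m) * 2^(n-2*m-(s-1))
      = (2*i+2*n).choose (i+n) := by
  rw [← lemD i n]
  apply Finset.sum_congr rfl
  intro s hsm
  simp only [Finset.mem_range] at hsm
  rw [lemW n s (by omega)]

end NatIdentities
section PolyPart

noncomputable def Pw (d0 d1 : ℝ) : Polynomial ℝ :=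
  Polynomial.C (d1/8) * X^0 + Polynomial.C (d0/2) * X^1 + Polynomial.C (d1/4) * X^2
    + Polynomial.C (d0/2) * X^3 + Polynomial.C (d1/8) * X^4

noncomputable def Gsum (d0 d1 : ℝ) (k : ℕ) (j : ℤ) : ℝ :=
  ∑ γ ∈ (Finset.univ : Finset (Fin k → ({-2, -1, 0, 1, 2} : Finset ℤ))).filter
      (fun γ => ∑ t, (γ t : ℤ) = j),
    ∏ t, Uwt d0 d1 (γ t : ℤ).natAbs

lemma Gsum_vanish (d0 d1 : ℝ) (k : ℕ) (j : ℤ) (hj : j < -(2*(k:ℤ))) : Gsum d0 d1 k j = 0 := by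
  unfold Gsum
  rw [Finset.sum_eq_zero]
  intro γ hγ
  exfalso
  simp only [Finset.mem_filter] at hγ
  have hlow : ∀ t : Fin k, (-2 : ℤ) ≤ (γ t : ℤ) := by
    intro t
    have := (γ t).2
    simp only [Finset.mem_insert, Finset.mem_singleton] at this
    rcases this with h|h|h|h|h <;> rw [h] <;> norm_num
  have : (k : ℤ) * (-2) ≤ ∑ t, (γ t : ℤ) := by
    calc (k:ℤ) * (-2) = ∑ _t : Fin k, (-2:ℤ) := by
          rw [Finset.sum_const, Finset.card_univ, Fintype.card_fin]; ring
    _ ≤ _ := Finset.sum_le_sum (fun t _ => hlow t)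
  rw [hγ.2] at this
  omega

lemma Gsum_succ (d0 d1 : ℝ) (k : ℕ) (j : ℤ) :
    Gsum d0 d1 (k+1) j
      = ∑ g ∈ ({-2, -1, 0, 1, 2} : Finset ℤ), Uwt d0 d1 g.natAbs * Gsum d0 d1 k (j - g) := by
  unfold Gsum
  simp only [Finset.sum_filter]
  rw [Fintype.sum_equiv (Fin.consEquiv (fun _ : Fin (k+1) => (({-2, -1, 0, 1, 2} : Finset ℤ) : Type))).symm
      _ (fun p => if (p.1 : ℤ) + ∑ t, ((p.2 t : ℤ)) = j
          then Uwt d0 d1 (p.1:ℤ).natAbs * ∏ t, Uwt d0 d1 ((p.2 t : ℤ)).natAbs else 0)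
      (fun γ => by
        simp only [Fin.consEquiv, Equiv.coe_fn_symm_mk, Fin.sum_univ_succ, Fin.prod_univ_succ]
        rfl)]
  rw [Fintype.sum_prod_type]
  rw [← Finset.sum_coe_sort (({-2, -1, 0, 1, 2} : Finset ℤ))
      (fun g => Uwt d0 d1 g.natAbs * ∑ γ : Fin k → (({-2, -1, 0, 1, 2} : Finset ℤ) : Type),
        if (∑ t, (γ t : ℤ)) = j - g then ∏ t, Uwt d0 d1 (γ t : ℤ).natAbs else 0)]
  apply Finset.sum_congr rfl
  intro g _
  rw [Finset.mul_sum]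
  apply Finset.sum_congr rfl
  intro γ _
  have hcond : ((g : ℤ) + ∑ t, (γ t : ℤ) = j) ↔ (∑ t, (γ t : ℤ) = j - (g:ℤ)) := by omega
  rw [if_congr hcond rfl rfl]
  split_ifs with h
  · rfl
  · rw [mul_zero]

lemma Gsum_zero (d0 d1 : ℝ) (j : ℤ) : Gsum d0 d1 0 j = if j = 0 then 1 else 0 := by
  unfold Gsum
  rw [Finset.sum_filter]
  simp [eq_comm]

lemma Gsum_coeff (d0 d1 : ℝ) : ∀ (k : ℕ) (j : ℤ) (n : ℕ), (n:ℤ) = 2*k + j →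
    Gsum d0 d1 k j = ((Pw d0 d1)^k).coeff n := by
  intro k
  induction k with
  | zero =>
    intro j n hn
    rw [Gsum_zero, pow_zero, Polynomial.coeff_one]
    simp only [Nat.cast_zero, mul_zero, zero_add] at hn
    split_ifs with h1 h2 h2
    · rfl
    · exfalso; omega
    · exfalso; omega
    · rfl
  | succ k ih =>
    intro j n hn
    rw [Gsum_succ]
    have hterm : ∀ g : ℤ, ∀ e : ℕ, (e:ℤ) = g + 2 →
        Gsum d0 d1 k (j - g) = (if e ≤ n then ((Pw d0 d1)^k).coeff (n - e) else 0) := by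
      intro g e he
      split_ifs with hle
      · exact ih (j - g) (n - e) (by push_cast [Nat.cast_sub hle]; omega)
      · exact Gsum_vanish d0 d1 k (j - g) (by push_cast at hn ⊢; omega)
    have expand : ((Pw d0 d1)^(k+1)).coeff n
        = (d1/8) * (if 0 ≤ n then ((Pw d0 d1)^k).coeff (n-0) else 0)
          + (d0/2) * (if 1 ≤ n then ((Pw d0 d1)^k).coeff (n-1) else 0)
          + (d1/4) * (if 2 ≤ n then ((Pw d0 d1)^k).coeff (n-2) else 0)
          + (d0/2) * (if 3 ≤ n then ((Pw d0 d1)^k).coeff (n-3) else 0)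
          + (d1/8) * (if 4 ≤ n then ((Pw d0 d1)^k).coeff (n-4) else 0) := by
      rw [pow_succ, mul_comm]
      simp only [Pw, add_mul, mul_assoc, Polynomial.coeff_add, Polynomial.coeff_C_mul,
        Polynomial.coeff_X_pow_mul']
    rw [expand]
    rw [show ({-2, -1, 0, 1, 2} : Finset ℤ) = insert (-2) (insert (-1) (insert 0 (insert 1 {2}))) from rfl]
    rw [Finset.sum_insert (by decide), Finset.sum_insert (by decide),
      Finset.sum_insert (by decide), Finset.sum_insert (by decide), Finset.sum_singleton]
    rw [hterm (-2) 0 (by norm_num), hterm (-1) 1 (by norm_num), hterm 0 2 (by norm_num),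
      hterm 1 3 (by norm_num), hterm 2 4 (by norm_num)]
    norm_num [Uwt]
    ring

lemma coeff_one_add_X_sq_pow (N b : ℕ) :
    ((1 + X^2 : Polynomial ℝ)^N).coeff b = if 2 ∣ b then (N.choose (b/2) : ℝ) else 0 := by
  rw [add_comm, add_pow, Polynomial.finset_sum_coeff]
  have h : ∀ r ∈ Finset.range (N+1),
      (((X:Polynomial ℝ)^2)^r * 1^(N-r) * ((N.choose r) : Polynomial ℝ)).coeff b
      = if b = 2*r then (N.choose r : ℝ) else 0 := by
    intro r _
    rw [one_pow, mul_one, ← pow_mul, ← Polynomial.C_eq_natCast, Polynomial.coeff_X_pow_mul',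
      Polynomial.coeff_C]
    split_ifs with h1 h2 h3 h4 <;> first | rfl | (exfalso; omega)
  rw [Finset.sum_congr rfl h]
  by_cases hb : 2 ∣ b
  · obtain ⟨c, rfl⟩ := hb
    have h2 : ∀ r ∈ Finset.range (N+1), (if 2*c = 2*r then (N.choose r : ℝ) else 0)
        = if c = r then (N.choose r : ℝ) else 0 := by
      intro r _
      congr 1
      simp only [eq_iff_iff]; omega
    rw [Finset.sum_congr rfl h2, Finset.sum_ite_eq, if_pos (by omega : (2:ℕ) ∣ 2*c)]
    simp only [Finset.mem_range]
    split_ifs with hc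
    · rw [Nat.mul_div_cancel_left c (by norm_num)]
    · rw [Nat.choose_eq_zero_of_lt (by omega)]; norm_num
  · rw [if_neg hb, Finset.sum_eq_zero]
    intro r _
    rw [if_neg (by omega)]

lemma coeff_Pw_pow (d0 d1 : ℝ) (k : ℕ) :
    ((Pw d0 d1)^k).coeff (2*k)
      = ∑ i ∈ Finset.range (k/2+1),
          (k.choose (2*i) : ℝ) * ((2*k-2*i).choose (k-i) : ℝ) * (d0/2)^(2*i) * (d1/8)^(k-2*i) := by
  have hfac : Pw d0 d1 = (1+X^2) * (Polynomial.C (d0/2) * X + Polynomial.C (d1/8) * (1+X^2)) := by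
    unfold Pw
    rw [show (d1/4) = d1/8 + d1/8 by ring, Polynomial.C_add]
    ring
  rw [hfac, mul_pow,
    add_pow (Polynomial.C (d0/2) * X) (Polynomial.C (d1/8) * (1+X^2)) k,
    Finset.mul_sum, Polynomial.finset_sum_coeff]
  have h : ∀ j ∈ Finset.range (k+1),
      ((1+X^2 : Polynomial ℝ)^k * ((Polynomial.C (d0/2) * X)^j
        * (Polynomial.C (d1/8) * (1+X^2))^(k-j) * ((k.choose j) : Polynomial ℝ))).coeff (2*k)
      = if 2 ∣ j then ((d0/2)^j * (d1/8)^(k-j) * (k.choose j) * ((2*k-j).choose ((2*k-j)/2) : ℝ)) else 0 := by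
    intro j hj
    simp only [Finset.mem_range] at hj
    have hpoly : ((1+X^2 : Polynomial ℝ)^k * ((Polynomial.C (d0/2) * X)^j
        * (Polynomial.C (d1/8) * (1+X^2))^(k-j) * ((k.choose j) : Polynomial ℝ)))
        = Polynomial.C ((d0/2)^j * (d1/8)^(k-j) * (k.choose j))
          * (X^j * (1+X^2)^(2*k-j)) := by
      rw [show 2*k-j = k + (k-j) by omega, pow_add, mul_pow, mul_pow,
        ← Polynomial.C_pow, ← Polynomial.C_pow, Polynomial.C_mul, Polynomial.C_mul,
        Polynomial.C_eq_natCast]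
      ring
    rw [hpoly, Polynomial.coeff_C_mul, Polynomial.coeff_X_pow_mul',
      if_pos (by omega : j ≤ 2*k), coeff_one_add_X_sq_pow]
    by_cases hdvd : 2 ∣ j
    · rw [if_pos (by omega : 2 ∣ 2*k - j), if_pos hdvd]
    · rw [if_neg (by omega : ¬ 2 ∣ 2*k - j), if_neg hdvd, mul_zero]
  rw [Finset.sum_congr rfl h, ← Finset.sum_filter]
  apply Finset.sum_nbij' (i := fun j => j/2) (j := fun i => 2*i)
  · intro a ha
    simp only [Finset.mem_filter, Finset.mem_range] at ha
    simp only [Finset.mem_range]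
    omega
  · intro a ha
    simp only [Finset.mem_range] at ha
    simp only [Finset.mem_filter, Finset.mem_range]
    omega
  · intro a ha
    simp only [Finset.mem_filter, Finset.mem_range] at ha
    omega
  · intro a _
    omega
  · intro j hj
    simp only [Finset.mem_filter, Finset.mem_range] at hj
    obtain ⟨c, rfl⟩ := hj.2
    have h1 : 2*c/2 = c := by omega
    have h2 : (2*k - 2*c)/2 = k - c := by omega
    rw [h1, h2]
    ring

end PolyPart

theorem cpath_eq_triple_sum (d0 d1 : ℝ) (k : ℕ) (hk : 1 ≤ k) :
    cpath d0 d1 k =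
      ∑ i ∈ Finset.range (k / 2 + 1),
        (k.choose (2 * i) : ℝ) *
          ∑ s ∈ Finset.range (min i (k - 2 * i) + 1),
            ((2 * i).choose (s + i) : ℝ) *
              ∑ m ∈ Finset.range ((k - 2 * i - s) / 2 + 1),
                ((k - 2 * i).choose (s + 2 * m) : ℝ) * ((s + 2 * m).choose m : ℝ) *
                  d0 ^ (2 * i) * d1 ^ (k - 2 * i) /
                    2 ^ (2 * k - 2 * i + 2 * m + (s - 1)) := by
  have hstart : cpath d0 d1 k = Gsum d0 d1 k 0 := rfl
  rw [hstart, Gsum_coeff d0 d1 k 0 (2*k) (by push_cast; ring), coeff_Pw_pow]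
  apply Finset.sum_congr rfl
  intro i hi
  simp only [Finset.mem_range] at hi
  have h2ik : 2*i ≤ k := by omega
  set n := k - 2*i with hn
  -- rewrite the inner double sum
  have inner : ∀ s ∈ Finset.range (min i n + 1),
      ((2*i).choose (s+i) : ℝ) *
        ∑ m ∈ Finset.range ((n-s)/2+1),
          (n.choose (s+2*m) : ℝ) * ((s+2*m).choose m : ℝ) * d0^(2*i) * d1^n
            / 2^(2*k - 2*i + 2*m + (s-1))
      = (d0^(2*i) * d1^n / 2^(2*k - 2*i + n)) *
          (((2*i).choose (s+i) * ∑ m ∈ Finset.range ((n-s)/2+1),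
            (n.choose (s+2*m)) * ((s+2*m).choose m) * 2^(n-2*m-(s-1)) : ℕ) : ℝ) := by
    intro s hsmem
    simp only [Finset.mem_range] at hsmem
    have hsn : s ≤ n := by omega
    push_cast
    rw [Finset.mul_sum, Finset.mul_sum, Finset.mul_sum]
    apply Finset.sum_congr rfl
    intro m hm
    simp only [Finset.mem_range] at hm
    have h2m : 2*m ≤ n - s := by omega
    have hexp : 2*k - 2*i + n = (2*k - 2*i + 2*m + (s-1)) + (n - 2*m - (s-1)) := by omega
    have hpow : (2:ℝ)^(2*k - 2*i + n)
        = 2^(2*k - 2*i + 2*m + (s-1)) * 2^(n - 2*m - (s-1)) := by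
      rw [← pow_add, ← hexp]
    rw [hpow]
    have hne1 : ((2:ℝ)^(2*k - 2*i + 2*m + (s-1))) ≠ 0 := by positivity
    have hne2 : ((2:ℝ)^(n - 2*m - (s-1))) ≠ 0 := by positivity
    field_simp
  rw [Finset.sum_congr rfl inner, ← Finset.mul_sum]
  rw [show (∑ s ∈ Finset.range (min i n + 1),
      (((2*i).choose (s+i) * ∑ m ∈ Finset.range ((n-s)/2+1),
        (n.choose (s+2*m)) * ((s+2*m).choose m) * 2^(n-2*m-(s-1)) : ℕ) : ℝ))
    = ((∑ s ∈ Finset.range (min i n + 1),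
        (2*i).choose (s+i) * ∑ m ∈ Finset.range ((n-s)/2+1),
          (n.choose (s+2*m)) * ((s+2*m).choose m) * 2^(n-2*m-(s-1)) : ℕ) : ℝ) by push_cast; ring]
  rw [lemDW i n]
  rw [show 2*i + 2*n = 2*k - 2*i by omega, show i + n = k - i by omega]
  -- now pure arithmetic
  have h8 : (8:ℝ) = 2^3 := by norm_num
  rw [div_pow, div_pow, h8, ← pow_mul]
  rw [show 2*k - 2*i + n = 2*i + (k - 2*i)*3 by omega]
  rw [pow_add]
  have hne : ((2:ℝ)^(2*i) * 2^((k-2*i)*3)) ≠ 0 := by positivity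
  field_simp
  ring
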